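/- For every w ∈ W and every λ ∈ V_ℂ such that α̂(λ) ≠ 0 and ρ(α̂(λ)) ≠ 0 for every coroot α̂ ∈ R̂, the following identity holds: c(wλ) · r(wλ)/r(λ) = ∏_{α̂ ∈ R̂(w)} (α̂(λ) − 1)/α̂(λ) · ∏_{β̂ ∈ R̂_+ ∖ R̂(w)} (β̂(λ) + 1)/β̂(λ) · ∏_{γ̂ ∈ R̂(w)} ρ(γ̂(λ) + 1)/ρ(γ̂(λ)). -/

import Mathlib

open scoped RealInnerProductSpace Classical

/-- A reduced crystallographic root system in `V = EuclideanSpace ℝ (Fin n)`, with a fixed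
positive system.  `W` acts on `V`, hence on coroots, and is extended complex-linearly to
the complexification `V_ℂ = Fin n → ℂ`. -/
structure RootData (n : ℕ) where
  roots : Finset (EuclideanSpace ℝ (Fin n))
  pos : Finset (EuclideanSpace ℝ (Fin n))
  pos_subset : pos ⊆ roots
  ne_zero : ∀ a ∈ roots, a ≠ 0
  union_eq : roots = pos ∪ pos.image (fun a => -a)
  pos_neg_disj : ∀ a ∈ pos, -a ∉ pos
  reduced : ∀ a ∈ roots, ∀ t : ℝ, t • a ∈ roots → t = 1 ∨ t = -1
  crystallographic : ∀ a ∈ roots, ∀ b ∈ roots, ∃ k : ℤ, 2 * ⟪a, b⟫ / ⟪a, a⟫ = (k : ℝ)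
  refl_mem : ∀ a ∈ roots, ∀ b ∈ roots, b - (2 * ⟪a, b⟫ / ⟪a, a⟫) • a ∈ roots

namespace RootData

variable {n : ℕ}

/-- The Weyl group `W`, generated by the orthogonal reflections in the roots. -/
noncomputable def weyl (S : RootData n) :
    Subgroup (EuclideanSpace ℝ (Fin n) ≃ₗ[ℝ] EuclideanSpace ℝ (Fin n)) :=
  Subgroup.closure {g | ∃ a ∈ S.roots, ∀ v, g v = v - (2 * ⟪a, v⟫ / ⟪a, a⟫) • a}

/-- The coroot `α̂ := 2α/(α,α)` of a root `α`. -/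
noncomputable def co (a : EuclideanSpace ℝ (Fin n)) : EuclideanSpace ℝ (Fin n) :=
  (2 / ⟪a, a⟫) • a

/-- Evaluation of a coroot (as a linear functional via the inner product), extended
`ℂ`-linearly to the complexification `V_ℂ = Fin n → ℂ`. -/
noncomputable def ev (a : EuclideanSpace ℝ (Fin n)) (l : Fin n → ℂ) : ℂ :=
  ∑ i, (a i : ℂ) * l i

/-- The `ℂ`-linear extension of `w : V ≃ₗ[ℝ] V` to the complexification `V_ℂ`. -/
noncomputable def cpx (w : EuclideanSpace ℝ (Fin n) ≃ₗ[ℝ] EuclideanSpace ℝ (Fin n))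
    (l : Fin n → ℂ) : Fin n → ℂ :=
  fun i => ∑ j, ((w (EuclideanSpace.single j 1)) i : ℂ) * l j

/-- The inversion set `R̂(w) = {α̂ ∈ R̂₊ : w(α̂) ∈ R̂₋}` (indexed by the positive roots
`α` with `w(α)` negative, which correspond bijectively to the coroots in question). -/
noncomputable def invSet (S : RootData n)
    (w : EuclideanSpace ℝ (Fin n) ≃ₗ[ℝ] EuclideanSpace ℝ (Fin n)) :
    Finset (EuclideanSpace ℝ (Fin n)) :=
  S.pos.filter fun a => w a ∈ S.pos.image (fun b => -b)

/-- `c(λ) := ∏_{α ∈ R₊} (α̂(λ) + 1)/α̂(λ)`. -/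
noncomputable def cfun (S : RootData n) (l : Fin n → ℂ) : ℂ :=
  ∏ a ∈ S.pos, (ev (co a) l + 1) / ev (co a) l

/-- `r(λ) := ∏_{α ∈ R₊} ρ(α̂(λ))`. -/
noncomputable def rfun (S : RootData n) (ρ : ℂ → ℂ) (l : Fin n → ℂ) : ℂ :=
  ∏ a ∈ S.pos, ρ (ev (co a) l)

end RootData

open RootData

namespace RootData
variable {n : ℕ}

lemma weyl_props (S : RootData n) {w : EuclideanSpace ℝ (Fin n) ≃ₗ[ℝ] EuclideanSpace ℝ (Fin n)}
    (hw : w ∈ S.weyl) :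
    (∀ u v, ⟪w u, w v⟫ = ⟪u, v⟫) ∧ (∀ a ∈ S.roots, w a ∈ S.roots) := by
  induction hw using Subgroup.closure_induction with
  | mem g hg =>
    obtain ⟨a, ha, hg⟩ := hg
    have ha0 : a ≠ 0 := S.ne_zero a ha
    have hip : ⟪a, a⟫ ≠ 0 := (inner_self_ne_zero (𝕜 := ℝ)).mpr ha0
    constructor
    · intro u v
      rw [hg u, hg v]
      simp only [inner_sub_left, inner_sub_right, real_inner_smul_left, real_inner_smul_right]
      rw [real_inner_comm a u]
      set p := ⟪a,a⟫; set q := ⟪u,a⟫; set r := ⟪a,v⟫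
      field_simp
      ring
    · intro b hb
      rw [hg b]
      exact S.refl_mem a ha b hb
  | one => exact ⟨fun u v => rfl, fun a ha => ha⟩
  | mul x y hx hy ihx ihy =>
    refine ⟨fun u v => ?_, fun a ha => ?_⟩
    · show ⟪x (y u), x (y v)⟫ = ⟪u, v⟫
      rw [ihx.1, ihy.1]
    · exact ihx.2 _ (ihy.2 a ha)
  | inv x hx ih =>
    constructor
    · intro u v
      have := ih.1 (x⁻¹ u) (x⁻¹ v)
      rw [show x (x⁻¹ u) = u from x.apply_symm_apply u,
        show x (x⁻¹ v) = v from x.apply_symm_apply v] at this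
      exact this.symm
    · intro a ha
      have hinj : Function.Injective (fun v => x v) := x.injective
      have himg : S.roots.image (fun v => x v) = S.roots := by
        apply Finset.eq_of_subset_of_card_le
        · intro b hb
          obtain ⟨c, hc, rfl⟩ := Finset.mem_image.mp hb
          exact ih.2 c hc
        · rw [Finset.card_image_of_injective _ hinj]
      have : a ∈ S.roots.image (fun v => x v) := by rw [himg]; exact ha
      obtain ⟨c, hc, rfl⟩ := Finset.mem_image.mp this
      rwa [show x⁻¹ (x c) = c from x.symm_apply_apply c]

lemma ev_cpx {w : EuclideanSpace ℝ (Fin n) ≃ₗ[ℝ] EuclideanSpace ℝ (Fin n)}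
    (hip : ∀ u v, ⟪w u, w v⟫ = ⟪u, v⟫) (b : EuclideanSpace ℝ (Fin n)) (l : Fin n → ℂ) :
    ev b (cpx w l) = ev (w⁻¹ b) l := by
  have key : ∀ j, ⟪b, w (EuclideanSpace.single j 1)⟫ = (w⁻¹ b) j := by
    intro j
    have h1 : ⟪w (w⁻¹ b), w (EuclideanSpace.single j 1)⟫ = ⟪w⁻¹ b, EuclideanSpace.single j 1⟫ :=
      hip _ _
    rw [show w (w⁻¹ b) = b from w.apply_symm_apply b] at h1
    rw [h1]
    simp [EuclideanSpace.inner_single_right]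
  calc ev b (cpx w l) = ∑ i, ∑ j, ((b i : ℂ) * ((w (EuclideanSpace.single j 1)) i : ℂ)) * l j := by
        simp only [ev, cpx, Finset.mul_sum]
        exact Finset.sum_congr rfl fun i _ => Finset.sum_congr rfl fun j _ => by ring
    _ = ∑ j, ∑ i, ((b i : ℂ) * ((w (EuclideanSpace.single j 1)) i : ℂ)) * l j :=
        Finset.sum_comm
    _ = ∑ j, ((⟪b, w (EuclideanSpace.single j 1)⟫ : ℝ) : ℂ) * l j := by
        refine Finset.sum_congr rfl fun j _ => ?_
        rw [← Finset.sum_mul]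
        congr 1
        rw [PiLp.inner_apply]
        push_cast
        simp
        exact Finset.sum_congr rfl fun i _ => mul_comm _ _
    _ = ev (w⁻¹ b) l := by
        simp only [ev]
        refine Finset.sum_congr rfl fun j _ => ?_
        rw [key j]

lemma ev_neg (a : EuclideanSpace ℝ (Fin n)) (l : Fin n → ℂ) : ev (-a) l = - ev a l := by
  simp [ev, ← Finset.sum_neg_distrib]

lemma co_neg (a : EuclideanSpace ℝ (Fin n)) : co (-a) = - co a := by
  simp [co, smul_neg]

lemma mem_invSet (S : RootData n) (w : EuclideanSpace ℝ (Fin n) ≃ₗ[ℝ] EuclideanSpace ℝ (Fin n))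
    (a : EuclideanSpace ℝ (Fin n)) : a ∈ invSet S w ↔ a ∈ S.pos ∧ -(w a) ∈ S.pos := by
  simp only [invSet, Finset.mem_filter, Finset.mem_image]
  constructor
  · rintro ⟨h1, b, hb, hba⟩
    refine ⟨h1, ?_⟩
    rw [← hba, neg_neg]
    exact hb
  · rintro ⟨h1, h2⟩
    exact ⟨h1, ⟨-(w a), h2, neg_neg _⟩⟩

lemma pos_or_neg (S : RootData n) {a : EuclideanSpace ℝ (Fin n)} (ha : a ∈ S.roots) :
    a ∈ S.pos ∨ -a ∈ S.pos := by
  rw [S.union_eq, Finset.mem_union] at ha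
  rcases ha with h | h
  · exact Or.inl h
  · obtain ⟨b, hb, hba⟩ := Finset.mem_image.mp h
    right
    rw [← hba, neg_neg]
    exact hb

lemma co_inv {w : EuclideanSpace ℝ (Fin n) ≃ₗ[ℝ] EuclideanSpace ℝ (Fin n)}
    (hip : ∀ u v, ⟪w u, w v⟫ = ⟪u, v⟫) (a : EuclideanSpace ℝ (Fin n)) :
    w⁻¹ (co a) = co (w⁻¹ a) := by
  have h : ⟪w⁻¹ a, w⁻¹ a⟫ = ⟪a, a⟫ := by
    have h2 := hip (w⁻¹ a) (w⁻¹ a)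
    rw [show w (w⁻¹ a) = a from w.apply_symm_apply a] at h2
    exact h2.symm
  show w.symm (co a) = co (w.symm a)
  simp only [co, map_smul]
  rw [show w.symm a = w⁻¹ a from rfl, h]

lemma ev_co_cpx {w : EuclideanSpace ℝ (Fin n) ≃ₗ[ℝ] EuclideanSpace ℝ (Fin n)}
    (hip : ∀ u v, ⟪w u, w v⟫ = ⟪u, v⟫) (a : EuclideanSpace ℝ (Fin n)) (l : Fin n → ℂ) :
    ev (co a) (cpx w l) = ev (co (w⁻¹ a)) l := by
  rw [ev_cpx hip, co_inv hip]

lemma prod_reindex (S : RootData n)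
    {w : EuclideanSpace ℝ (Fin n) ≃ₗ[ℝ] EuclideanSpace ℝ (Fin n)} (hw : w ∈ S.weyl)
    (l : Fin n → ℂ) (F : ℂ → ℂ) :
    ∏ a ∈ S.pos, F (ev (co a) (cpx w l)) =
    (∏ a ∈ invSet S w, F (- ev (co a) l)) * ∏ a ∈ S.pos \ invSet S w, F (ev (co a) l) := by
  obtain ⟨hip, hroots⟩ := S.weyl_props hw
  obtain ⟨hipinv, hrootsinv⟩ := S.weyl_props (inv_mem hw)
  have hwinv : ∀ v, w (w⁻¹ v) = v := fun v => w.apply_symm_apply v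
  have hinvw : ∀ v, w⁻¹ (w v) = v := fun v => w.symm_apply_apply v
  have step1 : ∏ a ∈ S.pos, F (ev (co a) (cpx w l)) =
      ∏ a ∈ S.pos, F (ev (co (w⁻¹ a)) l) :=
    Finset.prod_congr rfl fun a _ => by rw [ev_co_cpx hip]
  rw [step1, ← Finset.prod_filter_mul_prod_filter_not S.pos (fun a => -(w⁻¹ a) ∈ S.pos)]
  congr 1
  · refine Finset.prod_nbij' (fun a => -(w⁻¹ a)) (fun b => -(w b)) ?_ ?_ ?_ ?_ ?_
    · intro a ha
      rw [Finset.mem_filter] at ha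
      rw [mem_invSet]
      refine ⟨ha.2, ?_⟩
      rw [map_neg, hwinv, neg_neg]
      exact ha.1
    · intro b hb
      rw [mem_invSet] at hb
      rw [Finset.mem_filter]
      refine ⟨hb.2, ?_⟩
      rw [map_neg, hinvw, neg_neg]
      exact hb.1
    · intro a _; simp only [map_neg, hwinv, neg_neg]
    · intro b _; simp only [map_neg, hinvw, neg_neg]
    · intro a _
      simp only [co_neg, ev_neg, neg_neg]
  · refine Finset.prod_nbij' (fun a => w⁻¹ a) (fun b => w b) ?_ ?_ ?_ ?_ ?_
    · intro a ha
      rw [Finset.mem_filter] at ha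
      obtain ⟨ha1, ha2⟩ := ha
      have hr : w⁻¹ a ∈ S.roots := hrootsinv a (S.pos_subset ha1)
      have hpos : w⁻¹ a ∈ S.pos := (S.pos_or_neg hr).resolve_right ha2
      simp only [Finset.mem_sdiff, mem_invSet, not_and]
      refine ⟨hpos, fun _ => ?_⟩
      rw [hwinv]
      exact S.pos_neg_disj a ha1
    · intro b hb
      rw [Finset.mem_sdiff, mem_invSet, not_and] at hb
      obtain ⟨hb1, hb2⟩ := hb
      have hr : w b ∈ S.roots := hroots b (S.pos_subset hb1)
      have hpos : w b ∈ S.pos := (S.pos_or_neg hr).resolve_right (hb2 hb1)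
      rw [Finset.mem_filter]
      refine ⟨hpos, ?_⟩
      simp only [hinvw]
      exact fun h => S.pos_neg_disj b hb1 h
    · intro a _; simp only [hwinv]
    · intro b _; simp only [hinvw]
    · intro a _; rfl

end RootData

/-- for every `w ∈ W` and every `λ ∈ V_ℂ` such that `α̂(λ) ≠ 0` and
`ρ(α̂(λ)) ≠ 0` for every coroot `α̂ ∈ R̂`, one has
`c(wλ)·r(wλ)/r(λ) = ∏_{α̂ ∈ R̂(w)} (α̂(λ)−1)/α̂(λ) · ∏_{β̂ ∈ R̂₊∖R̂(w)} (β̂(λ)+1)/β̂(λ)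
  · ∏_{γ̂ ∈ R̂(w)} ρ(γ̂(λ)+1)/ρ(γ̂(λ))`. -/
theorem statement9 (n : ℕ) (S : RootData n) (ρ : ℂ → ℂ) (hρ : ∀ s : ℂ, ρ s = ρ (1 - s))
    (w : EuclideanSpace ℝ (Fin n) ≃ₗ[ℝ] EuclideanSpace ℝ (Fin n)) (hw : w ∈ S.weyl)
    (l : Fin n → ℂ)
    (h0 : ∀ a ∈ S.roots, ev (co a) l ≠ 0)
    (hρ0 : ∀ a ∈ S.roots, ρ (ev (co a) l) ≠ 0) :
    cfun S (cpx w l) * (rfun S ρ (cpx w l) / rfun S ρ l) =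
      (∏ a ∈ invSet S w, (ev (co a) l - 1) / ev (co a) l) *
      (∏ a ∈ S.pos \ invSet S w, (ev (co a) l + 1) / ev (co a) l) *
      (∏ a ∈ invSet S w, ρ (ev (co a) l + 1) / ρ (ev (co a) l)) := by
  have hIsub : invSet S w ⊆ S.pos := Finset.filter_subset _ _
  have hc : cfun S (cpx w l) =
      (∏ a ∈ invSet S w, (ev (co a) l - 1) / ev (co a) l) *
      ∏ a ∈ S.pos \ invSet S w, (ev (co a) l + 1) / ev (co a) l := by
    rw [cfun, prod_reindex S hw l (fun t => (t + 1) / t)]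
    congr 1
    exact Finset.prod_congr rfl fun a _ => by ring
  have hr1 : rfun S ρ (cpx w l) =
      (∏ a ∈ invSet S w, ρ (ev (co a) l + 1)) * ∏ a ∈ S.pos \ invSet S w, ρ (ev (co a) l) := by
    rw [rfun, prod_reindex S hw l ρ]
    congr 1
    refine Finset.prod_congr rfl fun a _ => ?_
    rw [hρ (- ev (co a) l), sub_neg_eq_add, add_comm]
  have hr2 : rfun S ρ l =
      (∏ a ∈ S.pos \ invSet S w, ρ (ev (co a) l)) * ∏ a ∈ invSet S w, ρ (ev (co a) l) :=
    (Finset.prod_sdiff hIsub).symm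
  have hD : (∏ a ∈ invSet S w, ρ (ev (co a) l)) ≠ 0 :=
    Finset.prod_ne_zero_iff.mpr fun a ha => hρ0 a (S.pos_subset (hIsub ha))
  have hE : (∏ a ∈ S.pos \ invSet S w, ρ (ev (co a) l)) ≠ 0 :=
    Finset.prod_ne_zero_iff.mpr fun a ha => hρ0 a (S.pos_subset (Finset.mem_sdiff.mp ha).1)
  have hCD : (∏ a ∈ invSet S w, ρ (ev (co a) l + 1) / ρ (ev (co a) l))
      = (∏ a ∈ invSet S w, ρ (ev (co a) l + 1)) / ∏ a ∈ invSet S w, ρ (ev (co a) l) :=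
    Finset.prod_div_distrib _ _
  rw [hc, hr1, hr2, hCD]
  rw [show (∏ a ∈ S.pos \ invSet S w, ρ (ev (co a) l)) * ∏ a ∈ invSet S w, ρ (ev (co a) l)
      = (∏ a ∈ invSet S w, ρ (ev (co a) l)) * ∏ a ∈ S.pos \ invSet S w, ρ (ev (co a) l)
    from mul_comm _ _]
  rw [mul_div_mul_right _ _ hE]
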